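/- Consider the first mass of the two-mass mass–spring chain under a quasi-periodic intervention on the second mass. Let m1, b1 : ℝ with 0 < m1, 0 < b1, let k0, k1 : ℝ with 0 < k0, 0 < k1, let l0, l1 : ℝ, and let A, ω, φ : ℕ → ℝ with Summable (fun j => |A j|). Let ζ2 : ℝ → ℝ, ζ2 t = ∑' j, A j * Real.cos (ω j * t + φ j), be the intervened trajectory of the second mass, and suppose X : ℝ → ℝ is twice differentiable and satisfies m1 * deriv (deriv X) t + b1 * deriv X t + (k0 + k1) * X t = k1 * ζ2 t + k0 * l0 - k1 * l1 for all t : ℝ. Writing D j := (k0 + k1 - m1 * (ω j)^2)^2 + b1^2 * (ω j)^2, we have Filter.Tendsto (fun t => X t - (k0 * l0 - k1 * l1) / (k0 + k1) - ∑' j, (k1 * A j / D j) * ((k0 + k1 - m1 * (ω j)^2) * Real.cos (ω j * t + φ j) + b1 * (ω j) * Real.sin (ω j * t + φ j))) Filter.atTop (nhds 0): every solution converges, independently of initial conditions, to the quasi-periodic trajectory given by the structural equation F1 of the derived Dynamic SCM. -/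

import Mathlib

set_option maxHeartbeats 1600000


open Filter Real

/-- `X` solves the damped oscillator equation `m ẍ + b ẋ + k x = g` with forcing `g`:
`X` is twice differentiable and the equation holds at every time `t`. -/
def SolvesDampedOsc (m b k : ℝ) (g : ℝ → ℝ) (X : ℝ → ℝ) : Prop :=
  Differentiable ℝ X ∧ Differentiable ℝ (deriv X) ∧
    ∀ t : ℝ, m * deriv (deriv X) t + b * deriv X t + k * X t = g t


lemma Dpos (m b K : ℝ) (hm : 0 < m) (hb : 0 < b) (hK : 0 < K) (w : ℝ) :
    0 < (K - m*w^2)^2 + b^2*w^2 := by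
  rcases eq_or_ne w 0 with rfl | h
  · simpa using pow_pos hK 2
  · have h1 : 0 < b^2*w^2 := by positivity
    nlinarith [sq_nonneg (K - m*w^2)]

lemma coeff_bound (m b K : ℝ) (hm : 0 < m) (hb : 0 < b) (hK : 0 < K) :
    ∃ C, 0 < C ∧ ∀ w : ℝ,
      (|K - m*w^2| + b*|w|) * (1 + w^2) ≤ C * ((K - m*w^2)^2 + b^2*w^2) := by
  set δ : ℝ := min (K^2/4) (b^2*K/(2*m)) with hδdef
  have hδ : 0 < δ := lt_min (by positivity) (by positivity)
  have hδD : ∀ w : ℝ, δ ≤ (K - m*w^2)^2 + b^2*w^2 := by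
    intro w
    rcases le_or_gt (m*w^2) (K/2) with h | h
    · have h1 : K/2 ≤ K - m*w^2 := by linarith
      have h2 : δ ≤ K^2/4 := min_le_left _ _
      nlinarith [sq_nonneg (b*w)]
    · have h1 : b^2*K/(2*m) ≤ b^2*w^2 := by
        rw [div_le_iff₀ (by positivity : (0:ℝ) < 2*m)]
        nlinarith [sq_nonneg b, mul_le_mul_of_nonneg_left h.le (sq_nonneg b)]
      have h2 : δ ≤ b^2*K/(2*m) := min_le_right _ _
      nlinarith [sq_nonneg (K - m*w^2)]
  set C1 : ℝ := (1+2*K/m)^2/δ + 4*(1+m/(2*K))^2/m^2 with hC1def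
  have hC1pos : 0 < C1 := by positivity
  have hC1 : ∀ w : ℝ, (1+w^2)^2 ≤ C1 * ((K - m*w^2)^2 + b^2*w^2) := by
    intro w
    set Dw : ℝ := (K - m*w^2)^2 + b^2*w^2 with hDw
    have hD0 : 0 < Dw := Dpos m b K hm hb hK w
    rcases le_or_gt (m*w^2) (2*K) with h | h
    · have hw2 : w^2 ≤ 2*K/m := by rw [le_div_iff₀ hm]; linarith
      calc (1+w^2)^2 ≤ (1+2*K/m)^2 := by nlinarith [sq_nonneg w, hw2]
        _ = ((1+2*K/m)^2/δ) * δ := (div_mul_cancel₀ _ hδ.ne').symm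
        _ ≤ ((1+2*K/m)^2/δ) * Dw := by
            apply mul_le_mul_of_nonneg_left (hδD w) (by positivity)
        _ ≤ C1 * Dw := by
            apply mul_le_mul_of_nonneg_right _ hD0.le
            have : (0:ℝ) ≤ 4*(1+m/(2*K))^2/m^2 := by positivity
            rw [hC1def]; linarith
    · have h1 : 1 + w^2 ≤ (1 + m/(2*K)) * w^2 := by
        have h0 : 1 ≤ m*w^2/(2*K) := (one_le_div (by positivity)).mpr (by linarith)
        have e : (1 + m/(2*K)) * w^2 = w^2 + m*w^2/(2*K) := by ring
        linarith [e ▸ le_refl ((1 + m/(2*K)) * w^2), h0]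
      have h2 : (1+w^2)^2 ≤ (1+m/(2*K))^2 * w^4 := by nlinarith [sq_nonneg w, h1]
      have h3 : m^2*w^4 ≤ 4*(K - m*w^2)^2 := by
        have ha : (0:ℝ) ≤ m*w^2 - 2*K := by linarith
        have hb' : (0:ℝ) ≤ 3*m*w^2 - 2*K := by linarith
        nlinarith [mul_nonneg ha hb']
      calc (1+w^2)^2 ≤ (1+m/(2*K))^2 * w^4 := h2
        _ = (4*(1+m/(2*K))^2/m^2) * (m^2*w^4/4) := by field_simp
        _ ≤ (4*(1+m/(2*K))^2/m^2) * ((K - m*w^2)^2) := by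
            apply mul_le_mul_of_nonneg_left (by linarith) (by positivity)
        _ ≤ (4*(1+m/(2*K))^2/m^2) * Dw := by
            apply mul_le_mul_of_nonneg_left _ (by positivity)
            nlinarith [sq_nonneg (b*w)]
        _ ≤ C1 * Dw := by
            apply mul_le_mul_of_nonneg_right _ hD0.le
            have : (0:ℝ) ≤ (1+2*K/m)^2/δ := by positivity
            rw [hC1def]; linarith
  refine ⟨C1 + 2, by linarith, fun w => ?_⟩
  set Dw : ℝ := (K - m*w^2)^2 + b^2*w^2 with hDw
  have hD0 : 0 < Dw := Dpos m b K hm hb hK w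
  set s : ℝ := |w| with hs
  set a : ℝ := |K - m*w^2| with ha
  have hs2 : s^2 = w^2 := sq_abs w
  have ha2 : a^2 = (K - m*w^2)^2 := sq_abs _
  have hs0 : 0 ≤ s := abs_nonneg _
  have ha0 : 0 ≤ a := abs_nonneg _
  have hX : (a + b*s)^2 ≤ 2*Dw := by nlinarith [sq_nonneg (a - b*s)]
  have hL2 : ((a + b*s)*(1 + w^2))^2 ≤ (2*Dw)*(C1*Dw) := by
    calc ((a + b*s)*(1 + w^2))^2 = (a + b*s)^2 * ((1+w^2)^2) := by ring
      _ ≤ (2*Dw)*(C1*Dw) :=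
          mul_le_mul hX (hC1 w) (sq_nonneg _) (by positivity)
  have hL0 : 0 ≤ (a + b*s)*(1+w^2) := by positivity
  have hCD : 0 ≤ (C1+2)*Dw := by positivity
  nlinarith [hL2, hL0, hCD, hD0, hC1pos, sq_nonneg Dw]

lemma ineq1 (b1 B s x : ℝ) (hb1 : 0 ≤ b1) (hB : 0 ≤ B) (hs : 0 ≤ s) (hx : s ^ 2 = x) :
    s * (B + b1 * s) ≤ (B + b1 * s) * (1 + x) := by
  subst hx
  nlinarith [mul_nonneg (add_nonneg hB (mul_nonneg hb1 hs))
    (by nlinarith [sq_nonneg (s - 1)] : (0:ℝ) ≤ 1 - s + s ^ 2)]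

open Filter Real

lemma homog_decay (m b k : ℝ) (hm : 0 < m) (hb : 0 < b) (hk : 0 < k)
    (Y : ℝ → ℝ) (hY1 : Differentiable ℝ Y) (hY2 : Differentiable ℝ (deriv Y))
    (hode : ∀ t, m * deriv (deriv Y) t + b * deriv Y t + k * Y t = 0) :
    Tendsto Y atTop (nhds 0) := by
  set v : ℝ → ℝ := deriv Y with hv
  set w : ℝ → ℝ := deriv v with hw
  have hYd : ∀ t, HasDerivAt Y (v t) t := fun t => (hY1 t).hasDerivAt
  have hvd : ∀ t, HasDerivAt v (w t) t := fun t => (hY2 t).hasDerivAt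
  set ε : ℝ := min (b*k/(2*m*k + b^2)) (min (1/2) (k/(2*m))) with hεdef
  have hden : (0:ℝ) < 2*m*k + b^2 := by positivity
  have hε : 0 < ε := by
    apply lt_min (by positivity) (lt_min (by norm_num) (by positivity))
  have hε1 : ε * (2*m*k + b^2) ≤ b*k := by
    have h : ε ≤ b*k/(2*m*k + b^2) := min_le_left _ _
    calc ε * (2*m*k+b^2) ≤ (b*k/(2*m*k+b^2)) * (2*m*k+b^2) :=
          mul_le_mul_of_nonneg_right h hden.le
      _ = b*k := by field_simp
  have hε2 : ε ≤ 1/2 := le_trans (min_le_right _ _) (min_le_left _ _)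
  have hε3 : ε * m ≤ k/2 := by
    have h : ε ≤ k/(2*m) := le_trans (min_le_right _ _) (min_le_right _ _)
    calc ε * m ≤ (k/(2*m)) * m := mul_le_mul_of_nonneg_right h hm.le
      _ = k/2 := by field_simp
  set c : ℝ := min (b/(2*m)) (ε/2) with hcdef
  have hc : 0 < c := lt_min (by positivity) (by positivity)
  have hc1 : c * m ≤ b/2 := by
    have h := min_le_left (b/(2*m)) (ε/2)
    calc c * m ≤ (b/(2*m)) * m := mul_le_mul_of_nonneg_right h hm.le
      _ = b/2 := by field_simp
  have hc2 : c ≤ ε/2 := min_le_right _ _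
  have f3 : c*ε*m ≤ b/4 := by
    have h1 : 0 ≤ (b/2 - c*m) * ε := mul_nonneg (by linarith) hε.le
    have h2 : ε * b ≤ (1/2) * b := mul_le_mul_of_nonneg_right hε2 hb.le
    nlinarith
  have f4 : c*ε*m ≤ ε*k/4 := by
    have h1 : 0 ≤ (k/2 - ε*m) * c := mul_nonneg (by linarith) hc.le
    have h2 : c * k ≤ (ε/2) * k := mul_le_mul_of_nonneg_right hc2 hk.le
    nlinarith
  have f5 : c*k ≤ ε*k/2 := by
    have := mul_le_mul_of_nonneg_right hc2 hk.le
    linarith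
  clear_value ε c
  set V : ℝ → ℝ := fun t => m/2 * (v t)^2 + k/2 * (Y t)^2 + ε*m*(Y t * v t) with hVdef
  have hVd : ∀ t, HasDerivAt V
      (m/2 * (2 * v t * w t) + k/2 * (2 * Y t * v t) + ε*m*(v t * v t + Y t * w t)) t := by
    intro t
    have h1 : HasDerivAt (fun t => (v t)^2) (2 * v t * w t) t := by
      have h := (hvd t).pow 2; simp at h; exact h
    have h2 : HasDerivAt (fun t => (Y t)^2) (2 * Y t * v t) t := by
      have h := (hYd t).pow 2; simp at h; exact h
    have h3 : HasDerivAt (fun t => Y t * v t) (v t * v t + Y t * w t) t := (hYd t).mul (hvd t)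
    exact ((h1.const_mul (m/2)).add (h2.const_mul (k/2))).add (h3.const_mul (ε*m))
  clear_value V
  set W : ℝ → ℝ := fun t => V t * Real.exp (c*t) with hWdef
  have hWd : ∀ t, HasDerivAt W
      ((m/2 * (2 * v t * w t) + k/2 * (2 * Y t * v t) + ε*m*(v t * v t + Y t * w t))
        * Real.exp (c*t) + V t * (Real.exp (c*t) * c)) t := by
    intro t
    have he : HasDerivAt (fun t => Real.exp (c*t)) (Real.exp (c*t) * c) t := by
      have h := (Real.hasDerivAt_exp (c*t)).comp t ((hasDerivAt_id t).const_mul c); simp at h; exact h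
    exact (hVd t).mul he
  clear_value W
  have hWanti : Antitone W := by
    apply antitone_of_deriv_nonpos (fun t => (hWd t).differentiableAt)
    intro t
    rw [(hWd t).deriv]
    have hodet := hode t
    have hexp : 0 < Real.exp (c*t) := Real.exp_pos _
    have hQ : 0 ≤ (b - ε*m - c*m/2) * (v t)^2 + ε*(b - c*m) * (Y t * v t)
        + (ε*k - c*k/2) * (Y t)^2 := by
      have cv : k*b/4*(v t)^2 ≤ (2*k*b - 2*k*ε*m - k*c*m - ε*b^2 - k*c*ε*m)*(v t)^2 := by
        apply mul_le_mul_of_nonneg_right _ (sq_nonneg _)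
        have h1 := mul_le_mul_of_nonneg_left hc1 hk.le
        have h2 := mul_le_mul_of_nonneg_left f3 hk.le
        nlinarith
      have cy : 0 ≤ (ε*k^2 - c*k^2 - k*c*ε*m)*(Y t)^2 := by
        apply mul_nonneg _ (sq_nonneg _)
        have h1 := mul_le_mul_of_nonneg_left f5 hk.le
        have h2 := mul_le_mul_of_nonneg_left f4 hk.le
        nlinarith
      have P1 : 0 ≤ ε*(k*Y t + b*v t)^2 := mul_nonneg hε.le (sq_nonneg _)
      have P2 : 0 ≤ k*(c*ε*m)*(Y t + v t)^2 :=
        mul_nonneg (mul_nonneg hk.le (by positivity)) (sq_nonneg _)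
      have P3 : 0 ≤ k*(c*ε*m)*(Y t - v t)^2 :=
        mul_nonneg (mul_nonneg hk.le (by positivity)) (sq_nonneg _)
      have P6 : 0 ≤ k*b/4*(v t)^2 := by positivity
      have h2k : 0 ≤ 2*k*((b - ε*m - c*m/2) * (v t)^2 + ε*(b - c*m) * (Y t * v t)
          + (ε*k - c*k/2) * (Y t)^2) := by nlinarith [P1, P3, cv, cy, P6]
      have hkpos : (0:ℝ) < 2*k := by linarith
      exact le_of_mul_le_mul_left (by linarith) hkpos
    have key : (m/2 * (2 * v t * w t) + k/2 * (2 * Y t * v t) + ε*m*(v t * v t + Y t * w t))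
        + V t * c ≤ 0 := by
      have expand : (m/2 * (2 * v t * w t) + k/2 * (2 * Y t * v t)
            + ε*m*(v t * v t + Y t * w t)) + V t * c
          = -((b - ε*m - c*m/2) * (v t)^2 + ε*(b - c*m) * (Y t * v t)
              + (ε*k - c*k/2) * (Y t)^2)
            + (v t + ε*Y t) * (m * w t + b * v t + k * Y t) := by
        simp only [hVdef]; ring
      rw [expand, hodet]
      linarith
    calc (m/2 * (2 * v t * w t) + k/2 * (2 * Y t * v t) + ε*m*(v t * v t + Y t * w t))
        * Real.exp (c*t) + V t * (Real.exp (c*t) * c)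
        = ((m/2 * (2 * v t * w t) + k/2 * (2 * Y t * v t) + ε*m*(v t * v t + Y t * w t))
          + V t * c) * Real.exp (c*t) := by ring
      _ ≤ 0 * Real.exp (c*t) := mul_le_mul_of_nonneg_right key hexp.le
      _ = 0 := by ring
  have hVlow : ∀ t, k/4 * (Y t)^2 ≤ V t := by
    intro t
    simp only [hVdef]
    nlinarith [mul_nonneg (mul_nonneg hε.le hm.le) (sq_nonneg (Y t + v t)),
      sq_nonneg (v t), sq_nonneg (Y t), hε2, hε3, mul_nonneg hm.le (sq_nonneg (v t))]
  have hVub : ∀ t, 0 ≤ t → V t ≤ V 0 * Real.exp (-(c*t)) := by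
    intro t ht
    have h := hWanti ht
    simp only [hWdef] at h
    have h0 : V t * Real.exp (c*t) ≤ V 0 := by simpa using h
    have hexp : 0 < Real.exp (c*t) := Real.exp_pos _
    rw [Real.exp_neg]
    calc V t = V t * Real.exp (c*t) * (Real.exp (c*t))⁻¹ := by field_simp
      _ ≤ V 0 * (Real.exp (c*t))⁻¹ := mul_le_mul_of_nonneg_right h0 (by positivity)
  have hsq : Tendsto (fun t => (Y t)^2) atTop (nhds 0) := by
    apply squeeze_zero' (Eventually.of_forall (fun t => sq_nonneg _))
      (g := fun t => (4/k * V 0) * Real.exp (-(c*t)))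
    · filter_upwards [eventually_ge_atTop (0:ℝ)] with t ht
      have h1 := hVlow t
      have h2 := hVub t ht
      have h3 : (Y t)^2 ≤ 4/k * V t := by
        rw [div_mul_eq_mul_div, le_div_iff₀ hk]
        linarith
      calc (Y t)^2 ≤ 4/k * V t := h3
        _ ≤ 4/k * (V 0 * Real.exp (-(c*t))) :=
            mul_le_mul_of_nonneg_left h2 (by positivity)
        _ = (4/k * V 0) * Real.exp (-(c*t)) := by ring
    · have hct : Tendsto (fun t : ℝ => c*t) atTop atTop :=
        Tendsto.const_mul_atTop hc tendsto_id
      have h := Real.tendsto_exp_neg_atTop_nhds_zero.comp hct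
      have h' : Tendsto (fun t : ℝ => Real.exp (-(c*t))) atTop (nhds 0) := by
        simpa [Function.comp_def] using h
      simpa using h'.const_mul (4/k * V 0)
  rw [tendsto_zero_iff_abs_tendsto_zero]
  have h' : Tendsto (fun t => Real.sqrt ((Y t)^2)) atTop (nhds (Real.sqrt 0)) :=
    (Real.continuous_sqrt.continuousAt).tendsto.comp hsq
  simp only [Real.sqrt_zero, Real.sqrt_sq_eq_abs] at h'
  exact h'

/-- The first mass of the two-mass mass–spring chain, under a quasi-periodic intervention
`do(X₂ = ζ₂)` on the second mass, converges (independently of initial conditions) to the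
quasi-periodic trajectory given by the structural equation `F₁` of the derived Dynamic SCM. -/

theorem mass_spring_quasiperiodic_intervention_asymptotics
    (m1 b1 : ℝ) (hm1 : 0 < m1) (hb1 : 0 < b1)
    (k0 k1 : ℝ) (hk0 : 0 < k0) (hk1 : 0 < k1)
    (l0 l1 : ℝ)
    (A ω φ : ℕ → ℝ) (hA : Summable (fun j => |A j|))
    (ζ2 : ℝ → ℝ) (hζ2 : ζ2 = fun t => ∑' j, A j * Real.cos (ω j * t + φ j))
    (X : ℝ → ℝ)
    (hX1 : Differentiable ℝ X) (hX2 : Differentiable ℝ (deriv X))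
    (hode : ∀ t : ℝ, m1 * deriv (deriv X) t + b1 * deriv X t + (k0 + k1) * X t
      = k1 * ζ2 t + k0 * l0 - k1 * l1)
    (D : ℕ → ℝ)
    (hD : D = fun j => (k0 + k1 - m1 * (ω j) ^ 2) ^ 2 + b1 ^ 2 * (ω j) ^ 2) :
    Tendsto (fun t => X t - (k0 * l0 - k1 * l1) / (k0 + k1) -
        ∑' j, (k1 * A j / D j) *
          ((k0 + k1 - m1 * (ω j) ^ 2) * Real.cos (ω j * t + φ j)
            + b1 * (ω j) * Real.sin (ω j * t + φ j)))
      atTop (nhds 0) := by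
  have hK : 0 < k0 + k1 := by linarith
  obtain ⟨C, hCpos, hCb⟩ := coeff_bound m1 b1 (k0+k1) hm1 hb1 hK
  have hDpos : ∀ j, 0 < D j := by
    intro j; rw [hD]; exact Dpos m1 b1 (k0+k1) hm1 hb1 hK (ω j)
  set f : ℕ → ℝ → ℝ := fun j t => (k1 * A j / D j) *
      ((k0 + k1 - m1 * (ω j) ^ 2) * Real.cos (ω j * t + φ j)
        + b1 * (ω j) * Real.sin (ω j * t + φ j)) with hfdef
  set f1 : ℕ → ℝ → ℝ := fun j t => (k1 * A j / D j * (ω j)) *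
      (b1 * (ω j) * Real.cos (ω j * t + φ j)
        - (k0 + k1 - m1 * (ω j) ^ 2) * Real.sin (ω j * t + φ j)) with hf1def
  set f2 : ℕ → ℝ → ℝ := fun j t => (k1 * A j / D j * (ω j) ^ 2) *
      (-((k0 + k1 - m1 * (ω j) ^ 2) * Real.cos (ω j * t + φ j))
        - b1 * (ω j) * Real.sin (ω j * t + φ j)) with hf2def
  set u : ℕ → ℝ := fun j => k1 * |A j| / D j *
      ((|k0 + k1 - m1 * (ω j) ^ 2| + b1 * |ω j|) * (1 + (ω j) ^ 2)) with hudef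
  show Tendsto (fun t => X t - (k0 * l0 - k1 * l1) / (k0 + k1) - ∑' j, f j t)
      atTop (nhds 0)
  -- basic abbreviations
  have habs_q : ∀ j, |k1 * A j / D j| = k1 * |A j| / D j := by
    intro j
    rw [abs_div, abs_mul, abs_of_pos hk1, abs_of_pos (hDpos j)]
  -- trig bounds
  have htrig0 : ∀ j t, |(k0 + k1 - m1 * (ω j) ^ 2) * Real.cos (ω j * t + φ j)
      + b1 * (ω j) * Real.sin (ω j * t + φ j)|
      ≤ |k0 + k1 - m1 * (ω j) ^ 2| + b1 * |ω j| := by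
    intro j t
    calc |(k0 + k1 - m1 * (ω j) ^ 2) * Real.cos (ω j * t + φ j)
        + b1 * (ω j) * Real.sin (ω j * t + φ j)|
        ≤ |(k0 + k1 - m1 * (ω j) ^ 2) * Real.cos (ω j * t + φ j)|
          + |b1 * (ω j) * Real.sin (ω j * t + φ j)| := abs_add_le _ _
      _ = |k0 + k1 - m1 * (ω j) ^ 2| * |Real.cos (ω j * t + φ j)|
          + b1 * |ω j| * |Real.sin (ω j * t + φ j)| := by
          rw [abs_mul, abs_mul, abs_mul, abs_of_pos hb1]
      _ ≤ |k0 + k1 - m1 * (ω j) ^ 2| * 1 + b1 * |ω j| * 1 := by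
          gcongr
          · exact Real.abs_cos_le_one _
          · exact Real.abs_sin_le_one _
      _ = |k0 + k1 - m1 * (ω j) ^ 2| + b1 * |ω j| := by ring
  have htrig1 : ∀ j t, |b1 * (ω j) * Real.cos (ω j * t + φ j)
      - (k0 + k1 - m1 * (ω j) ^ 2) * Real.sin (ω j * t + φ j)|
      ≤ |k0 + k1 - m1 * (ω j) ^ 2| + b1 * |ω j| := by
    intro j t
    calc |b1 * (ω j) * Real.cos (ω j * t + φ j)
        - (k0 + k1 - m1 * (ω j) ^ 2) * Real.sin (ω j * t + φ j)|
        ≤ |b1 * (ω j) * Real.cos (ω j * t + φ j)|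
          + |(k0 + k1 - m1 * (ω j) ^ 2) * Real.sin (ω j * t + φ j)| := abs_sub _ _
      _ = b1 * |ω j| * |Real.cos (ω j * t + φ j)|
          + |k0 + k1 - m1 * (ω j) ^ 2| * |Real.sin (ω j * t + φ j)| := by
          rw [abs_mul, abs_mul, abs_mul, abs_of_pos hb1]
      _ ≤ b1 * |ω j| * 1 + |k0 + k1 - m1 * (ω j) ^ 2| * 1 := by
          gcongr
          · exact Real.abs_cos_le_one _
          · exact Real.abs_sin_le_one _
      _ = |k0 + k1 - m1 * (ω j) ^ 2| + b1 * |ω j| := by ring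
  have htrig2 : ∀ j t, |-((k0 + k1 - m1 * (ω j) ^ 2) * Real.cos (ω j * t + φ j))
      - b1 * (ω j) * Real.sin (ω j * t + φ j)|
      ≤ |k0 + k1 - m1 * (ω j) ^ 2| + b1 * |ω j| := by
    intro j t
    have e : -((k0 + k1 - m1 * (ω j) ^ 2) * Real.cos (ω j * t + φ j))
        - b1 * (ω j) * Real.sin (ω j * t + φ j)
        = -((k0 + k1 - m1 * (ω j) ^ 2) * Real.cos (ω j * t + φ j)
          + b1 * (ω j) * Real.sin (ω j * t + φ j)) := by ring
    rw [e, abs_neg]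
    exact htrig0 j t
  -- norm bounds
  have hbf : ∀ j t, ‖f j t‖ ≤ u j := by
    intro j t
    have e : ‖f j t‖ = (k1 * |A j| / D j) *
        |(k0 + k1 - m1 * (ω j) ^ 2) * Real.cos (ω j * t + φ j)
          + b1 * (ω j) * Real.sin (ω j * t + φ j)| := by
      simp only [hfdef, Real.norm_eq_abs, abs_mul, habs_q]
    rw [e]
    have h0 : (0:ℝ) ≤ k1 * |A j| / D j := div_nonneg (by positivity) (hDpos j).le
    calc (k1 * |A j| / D j) * |(k0 + k1 - m1 * (ω j) ^ 2) * Real.cos (ω j * t + φ j)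
          + b1 * (ω j) * Real.sin (ω j * t + φ j)|
        ≤ (k1 * |A j| / D j) * (|k0 + k1 - m1 * (ω j) ^ 2| + b1 * |ω j|) :=
          mul_le_mul_of_nonneg_left (htrig0 j t) h0
      _ ≤ (k1 * |A j| / D j) *
            ((|k0 + k1 - m1 * (ω j) ^ 2| + b1 * |ω j|) * (1 + (ω j) ^ 2)) := by
          apply mul_le_mul_of_nonneg_left _ h0
          apply le_mul_of_one_le_right (by positivity)
          nlinarith [sq_nonneg (ω j)]
      _ = u j := rfl
  have hbf1 : ∀ j t, ‖f1 j t‖ ≤ u j := by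
    intro j t
    have e : ‖f1 j t‖ = (k1 * |A j| / D j * |ω j|) *
        |b1 * (ω j) * Real.cos (ω j * t + φ j)
          - (k0 + k1 - m1 * (ω j) ^ 2) * Real.sin (ω j * t + φ j)| := by
      simp only [hf1def, Real.norm_eq_abs, abs_mul, habs_q]
    rw [e]
    have h0 : (0:ℝ) ≤ k1 * |A j| / D j := div_nonneg (by positivity) (hDpos j).le
    calc (k1 * |A j| / D j * |ω j|) *
          |b1 * (ω j) * Real.cos (ω j * t + φ j)
            - (k0 + k1 - m1 * (ω j) ^ 2) * Real.sin (ω j * t + φ j)|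
        ≤ (k1 * |A j| / D j * |ω j|) * (|k0 + k1 - m1 * (ω j) ^ 2| + b1 * |ω j|) :=
          mul_le_mul_of_nonneg_left (htrig1 j t) (by positivity)
      _ ≤ u j := by
          show _ ≤ k1 * |A j| / D j *
            ((|k0 + k1 - m1 * (ω j) ^ 2| + b1 * |ω j|) * (1 + (ω j) ^ 2))
          rw [mul_assoc]
          apply mul_le_mul_of_nonneg_left _ h0
          exact ineq1 b1 _ _ _ hb1.le (abs_nonneg _) (abs_nonneg _) (sq_abs _)
  have hbf2 : ∀ j t, ‖f2 j t‖ ≤ u j := by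
    intro j t
    have e : ‖f2 j t‖ = (k1 * |A j| / D j * |ω j| ^ 2) *
        |-((k0 + k1 - m1 * (ω j) ^ 2) * Real.cos (ω j * t + φ j))
          - b1 * (ω j) * Real.sin (ω j * t + φ j)| := by
      simp only [hf2def, Real.norm_eq_abs, abs_mul, habs_q, abs_pow]
    rw [e]
    have h0 : (0:ℝ) ≤ k1 * |A j| / D j := div_nonneg (by positivity) (hDpos j).le
    have hs2 : |ω j| ^ 2 = (ω j) ^ 2 := sq_abs _
    calc (k1 * |A j| / D j * |ω j| ^ 2) *
          |-((k0 + k1 - m1 * (ω j) ^ 2) * Real.cos (ω j * t + φ j))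
            - b1 * (ω j) * Real.sin (ω j * t + φ j)|
        ≤ (k1 * |A j| / D j * |ω j| ^ 2) *
            (|k0 + k1 - m1 * (ω j) ^ 2| + b1 * |ω j|) :=
          mul_le_mul_of_nonneg_left (htrig2 j t) (by positivity)
      _ ≤ u j := by
          show _ ≤ k1 * |A j| / D j *
            ((|k0 + k1 - m1 * (ω j) ^ 2| + b1 * |ω j|) * (1 + (ω j) ^ 2))
          rw [mul_assoc]
          apply mul_le_mul_of_nonneg_left _ h0
          rw [hs2]
          have hnn : (0:ℝ) ≤ |k0 + k1 - m1 * (ω j) ^ 2| + b1 * |ω j| := by positivity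
          nlinarith [hnn, sq_nonneg (ω j)]
  -- derivatives of the terms
  have hlin : ∀ j t, HasDerivAt (fun t : ℝ => ω j * t + φ j) (ω j) t := by
    intro j t
    simpa using ((hasDerivAt_id t).const_mul (ω j)).add_const (φ j)
  have hcos : ∀ j t, HasDerivAt (fun t : ℝ => Real.cos (ω j * t + φ j))
      (-Real.sin (ω j * t + φ j) * ω j) t :=
    fun j t => (Real.hasDerivAt_cos _).comp t (hlin j t)
  have hsin : ∀ j t, HasDerivAt (fun t : ℝ => Real.sin (ω j * t + φ j))
      (Real.cos (ω j * t + φ j) * ω j) t :=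
    fun j t => (Real.hasDerivAt_sin _).comp t (hlin j t)
  have hfd : ∀ j t, HasDerivAt (f j) (f1 j t) t := by
    intro j t
    have h := (((hcos j t).const_mul (k0 + k1 - m1 * (ω j) ^ 2)).add
      ((hsin j t).const_mul (b1 * (ω j)))).const_mul (k1 * A j / D j)
    have e : f1 j t = (k1 * A j / D j) *
        ((k0 + k1 - m1 * (ω j) ^ 2) * (-Real.sin (ω j * t + φ j) * ω j)
          + (b1 * (ω j)) * (Real.cos (ω j * t + φ j) * ω j)) := by
      simp only [hf1def]; ring
    rw [e]
    exact h
  have hf1d : ∀ j t, HasDerivAt (f1 j) (f2 j t) t := by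
    intro j t
    have h := (((hcos j t).const_mul (b1 * (ω j))).sub
      ((hsin j t).const_mul (k0 + k1 - m1 * (ω j) ^ 2))).const_mul (k1 * A j / D j * (ω j))
    have e : f2 j t = (k1 * A j / D j * (ω j)) *
        ((b1 * (ω j)) * (-Real.sin (ω j * t + φ j) * ω j)
          - (k0 + k1 - m1 * (ω j) ^ 2) * (Real.cos (ω j * t + φ j) * ω j)) := by
      simp only [hf2def]; ring
    rw [e]
    exact h
  -- the termwise ODE identity
  have eterm : ∀ t j, m1 * f2 j t + b1 * f1 j t + (k0 + k1) * f j t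
      = k1 * (A j * Real.cos (ω j * t + φ j)) := by
    intro t j
    have hDj : D j = (k0 + k1 - m1 * (ω j) ^ 2) ^ 2 + b1 ^ 2 * (ω j) ^ 2 := by rw [hD]
    have e1 : m1 * f2 j t + b1 * f1 j t + (k0 + k1) * f j t
        = (k1 * A j / D j) *
          (((k0 + k1 - m1 * (ω j) ^ 2) ^ 2 + b1 ^ 2 * (ω j) ^ 2)
            * Real.cos (ω j * t + φ j)) := by
      simp only [hfdef, hf1def, hf2def]; ring
    rw [e1, ← hDj]
    field_simp [(hDpos j).ne']
    try ring
  -- summability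
  have hu0 : ∀ j, 0 ≤ u j := by
    intro j
    show (0:ℝ) ≤ k1 * |A j| / D j * _
    have h0 : (0:ℝ) ≤ k1 * |A j| / D j := div_nonneg (by positivity) (hDpos j).le
    exact mul_nonneg h0 (by positivity)
  have huC : ∀ j, u j ≤ k1 * C * |A j| := by
    intro j
    have hb := hCb (ω j)
    have hDj : (k0 + k1 - m1 * (ω j) ^ 2) ^ 2 + b1 ^ 2 * (ω j) ^ 2 = D j := by rw [hD]
    rw [hDj] at hb
    have h0 : (0:ℝ) ≤ k1 * |A j| / D j := div_nonneg (by positivity) (hDpos j).le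
    calc u j = k1 * |A j| / D j *
          ((|k0 + k1 - m1 * (ω j) ^ 2| + b1 * |ω j|) * (1 + (ω j) ^ 2)) := rfl
      _ ≤ k1 * |A j| / D j * (C * D j) := mul_le_mul_of_nonneg_left hb h0
      _ = k1 * C * |A j| := by
          field_simp [(hDpos j).ne']
          try ring
  have hu_sum : Summable u :=
    Summable.of_nonneg_of_le hu0 huC (hA.mul_left (k1 * C))
  have hsf : ∀ t, Summable (fun j => f j t) :=
    fun t => Summable.of_norm_bounded hu_sum (fun j => hbf j t)
  have hsf1 : ∀ t, Summable (fun j => f1 j t) :=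
    fun t => Summable.of_norm_bounded hu_sum (fun j => hbf1 j t)
  have hsf2 : ∀ t, Summable (fun j => f2 j t) :=
    fun t => Summable.of_norm_bounded hu_sum (fun j => hbf2 j t)
  -- derivative of the sums
  have hFd : ∀ t, HasDerivAt (fun t => ∑' j, f j t) (∑' j, f1 j t) t :=
    fun t => hasDerivAt_tsum hu_sum (fun j y => hfd j y) (fun j y => hbf1 j y) (hsf 0) t
  have hF1d : ∀ t, HasDerivAt (fun t => ∑' j, f1 j t) (∑' j, f2 j t) t :=
    fun t => hasDerivAt_tsum hu_sum (fun j y => hf1d j y) (fun j y => hbf2 j y) (hsf1 0) t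
  clear_value f f1 f2 u
  -- set up Y
  set Y : ℝ → ℝ := fun t => X t - (k0 * l0 - k1 * l1) / (k0 + k1) - ∑' j, f j t with hY
  have hYd : ∀ t, HasDerivAt Y (deriv X t - ∑' j, f1 j t) t :=
    fun t => (((hX1 t).hasDerivAt.sub_const _)).sub (hFd t)
  have hY1 : Differentiable ℝ Y := fun t => (hYd t).differentiableAt
  have hdY : deriv Y = fun t => deriv X t - ∑' j, f1 j t :=
    funext fun t => (hYd t).deriv
  have hYdd : ∀ t, HasDerivAt (deriv Y) (deriv (deriv X) t - ∑' j, f2 j t) t := by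
    rw [hdY]
    exact fun t => ((hX2 t).hasDerivAt).sub (hF1d t)
  have hY2 : Differentiable ℝ (deriv Y) := fun t => (hYdd t).differentiableAt
  have hddY : ∀ t, deriv (deriv Y) t = deriv (deriv X) t - ∑' j, f2 j t :=
    fun t => (hYdd t).deriv
  have hodeY : ∀ t, m1 * deriv (deriv Y) t + b1 * deriv Y t + (k0 + k1) * Y t = 0 := by
    intro t
    rw [hddY t, hdY]
    have h1 := hode t
    have h3 : (k0 + k1) * ((k0 * l0 - k1 * l1) / (k0 + k1)) = k0 * l0 - k1 * l1 := by
      field_simp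
    have h2 : m1 * (∑' j, f2 j t) + b1 * (∑' j, f1 j t) + (k0 + k1) * (∑' j, f j t)
        = k1 * ζ2 t := by
      have e2 : m1 * (∑' j, f2 j t) = ∑' j, m1 * f2 j t := tsum_mul_left.symm
      have e1 : b1 * (∑' j, f1 j t) = ∑' j, b1 * f1 j t := tsum_mul_left.symm
      have e0 : (k0 + k1) * (∑' j, f j t) = ∑' j, (k0 + k1) * f j t := tsum_mul_left.symm
      have eadd : (∑' j, m1 * f2 j t) + (∑' j, b1 * f1 j t)
          = ∑' j, (m1 * f2 j t + b1 * f1 j t) :=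
        (Summable.tsum_add ((hsf2 t).mul_left m1) ((hsf1 t).mul_left b1)).symm
      have eadd2 : (∑' j, (m1 * f2 j t + b1 * f1 j t)) + (∑' j, (k0 + k1) * f j t)
          = ∑' j, (m1 * f2 j t + b1 * f1 j t + (k0 + k1) * f j t) :=
        (Summable.tsum_add (((hsf2 t).mul_left m1).add ((hsf1 t).mul_left b1))
          ((hsf t).mul_left (k0 + k1))).symm
      have esum : (∑' j, (m1 * f2 j t + b1 * f1 j t + (k0 + k1) * f j t))
          = ∑' j, k1 * (A j * Real.cos (ω j * t + φ j)) := tsum_congr (eterm t)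
      have efin : (∑' j, k1 * (A j * Real.cos (ω j * t + φ j))) = k1 * ζ2 t := by
        rw [hζ2]; exact tsum_mul_left
      rw [e2, e1, e0, eadd, eadd2, esum, efin]
    show m1 * (deriv (deriv X) t - ∑' j, f2 j t)
        + b1 * (deriv X t - ∑' j, f1 j t)
        + (k0 + k1) * (X t - (k0 * l0 - k1 * l1) / (k0 + k1) - ∑' j, f j t) = 0
    nlinarith [h1, h2, h3]
  exact homog_decay m1 b1 (k0 + k1) hm1 hb1 hK Y hY1 hY2 hodeY
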